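/- Let A be a unital complex Banach algebra, a ∈ A with generalized Drazin inverse x (a*x = x*a, x*a*x = x, a - a^2*x quasinilpotent), and b, c ∈ A with a*b = c*a and b*a = a*c. Then (a*x)*b = b*(a*x) and x*b = c*x. -/

import Mathlib

open Filter Topology
open scoped NNReal ENNReal

lemma aux_tendsto {A : Type*} [NormedRing A] [NormedAlgebra ℂ A] [CompleteSpace A]
    (q : A) (hq : spectralRadius ℂ q = 0) (C : ℝ) :
    Tendsto (fun n : ℕ => C ^ n * ‖q ^ n‖) atTop (𝓝 0) := by
  have T := spectrum.pow_nnnorm_pow_one_div_tendsto_nhds_spectralRadius q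
  rw [hq] at T
  set M : ℝ := |C| + 1 with hM
  have hM0 : 0 < M := by positivity
  set ε : ℝ≥0 := ⟨(2 * M)⁻¹, by positivity⟩ with hε
  have hε0 : (0:ℝ≥0∞) < (ε : ℝ≥0∞) := by
    simp only [ENNReal.coe_pos]
    rw [← NNReal.coe_pos]
    show (0:ℝ) < (2*M)⁻¹
    positivity
  have hev : ∀ᶠ n : ℕ in atTop, (‖q ^ n‖₊ : ℝ≥0∞) ^ (1 / (n:ℝ)) < (ε : ℝ≥0∞) :=
    T (ENNReal.nhds_zero_basis.mem_of_mem hε0)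
  have hbound : ∀ᶠ n : ℕ in atTop, |C ^ n * ‖q ^ n‖| ≤ (1/2 : ℝ) ^ n := by
    filter_upwards [hev, eventually_ge_atTop 1] with n hn hn1
    have hnn : (‖q ^ n‖₊ : ℝ≥0∞) < (ε : ℝ≥0∞) ^ n := by
      have := ENNReal.rpow_lt_rpow hn (by positivity : (0:ℝ) < (n:ℝ))
      rwa [← ENNReal.rpow_mul,
        one_div, inv_mul_cancel₀ (by exact_mod_cast Nat.one_le_iff_ne_zero.mp hn1 : (n:ℝ) ≠ 0),
        ENNReal.rpow_one, ENNReal.rpow_natCast] at this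
    have hnr : ‖q ^ n‖ < ((2*M)⁻¹) ^ n := by
      have := hnn
      rw [← ENNReal.coe_pow, ENNReal.coe_lt_coe] at this
      calc ‖q ^ n‖ = ((‖q ^ n‖₊ : ℝ≥0) : ℝ) := by simp
        _ < ((ε ^ n : ℝ≥0) : ℝ) := by exact_mod_cast this
        _ = ((2*M)⁻¹) ^ n := by exact NNReal.coe_pow ε n
    rw [abs_mul, abs_pow, abs_norm]
    calc |C| ^ n * ‖q ^ n‖ ≤ M ^ n * ((2*M)⁻¹)^n := by
          apply mul_le_mul _ hnr.le (norm_nonneg _) (by positivity)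
          exact pow_le_pow_left₀ (abs_nonneg C) (by simp [hM]) n
      _ = (1/2:ℝ) ^ n := by
          rw [← mul_pow]
          congr 1
          field_simp
  have h2 : Tendsto (fun n : ℕ => (1/2:ℝ) ^ n) atTop (𝓝 0) :=
    tendsto_pow_atTop_nhds_zero_of_lt_one (by norm_num) (by norm_num)
  exact squeeze_zero_norm' (hbound.mono fun n h => by rwa [Real.norm_eq_abs]) h2

lemma drazin_comm {A : Type*} [NormedRing A] [NormedAlgebra ℂ A] [CompleteSpace A]
    (s d b p : A) (hp : p = s * d) (hsd : s * d = d * s)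
    (hdsd : d * s * d = d)
    (hq : ∀ C : ℝ, Tendsto (fun n : ℕ => C ^ n * ‖(s - s * p) ^ n‖) atTop (𝓝 0))
    (hsb : s * b = b * s) : d * b = b * d := by
  have cds : Commute s d := hsd
  have csb : Commute s b := hsb
  have csp : Commute s p := by rw [hp]; exact (Commute.refl s).mul_right cds
  have hdp : d * p = d := by rw [hp, ← mul_assoc, hdsd]
  have hpd : p * d = d := by rw [hp, hsd, hdsd]
  have hpp : p * p = p := by
    conv_lhs => rw [hp, mul_assoc, ← mul_assoc d s d, hdsd]
    rw [← hp]
  have hpn : ∀ n : ℕ, 1 ≤ n → p ^ n = p := by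
    intro n hn
    induction n with
    | zero => omega
    | succ m ih =>
      rcases Nat.eq_or_lt_of_le hn with h | h
      · simp [← h]
      · rw [pow_succ, ih (by omega), hpp]
  have csnb : ∀ n : ℕ, s ^ n * b = b * s ^ n := fun n => (csb.pow_left n).eq
  have csnp : ∀ n : ℕ, s ^ n * p = p * s ^ n := fun n => (csp.pow_left n).eq
  have hdnsn : ∀ n : ℕ, 1 ≤ n → d ^ n * s ^ n = p := by
    intro n hn
    rw [← cds.symm.mul_pow, ← hsd, ← hp, hpn n hn]
  have hsndn : ∀ n : ℕ, 1 ≤ n → s ^ n * d ^ n = p := by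
    intro n hn
    rw [← cds.mul_pow, ← hp, hpn n hn]
  have hqn : ∀ n : ℕ, 1 ≤ n → (s - s * p) ^ n = s ^ n - s ^ n * p := by
    intro n hn
    induction n with
    | zero => omega
    | succ m ih =>
      rcases Nat.eq_or_lt_of_le hn with h | h
      · simp [← h]
      · have hm : 1 ≤ m := by omega
        have e2 : s ^ m * (s * p) = s ^ (m+1) * p := by rw [← mul_assoc, ← pow_succ]
        have e3 : s ^ m * p * s = s ^ (m+1) * p := by
          rw [mul_assoc, ← csp.eq, ← mul_assoc, ← pow_succ]
        have e4 : s ^ m * p * (s * p) = s ^ (m+1) * p := by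
          rw [← mul_assoc, e3, mul_assoc, hpp]
        calc (s - s * p) ^ (m+1) = (s ^ m - s ^ m * p) * (s - s * p) := by
              rw [pow_succ, ih hm]
          _ = s ^ m * s - s ^ m * (s * p) - (s ^ m * p * s - s ^ m * p * (s * p)) := by
              noncomm_ring
          _ = s ^ (m+1) - s ^ (m+1) * p - (s ^ (m+1) * p - s ^ (m+1) * p) := by
              rw [← pow_succ, e2, e3, e4]
          _ = s ^ (m+1) - s ^ (m+1) * p := by rw [sub_self, sub_zero]
  have key1 : ∀ n : ℕ, 1 ≤ n → d ^ n * (p * b) * ((s - s * p) ^ n) = p * b - p * b * p := by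
    intro n hn
    have T1 : d ^ n * (p * b) * s ^ n = p * b := by
      calc d ^ n * (p * b) * s ^ n = d ^ n * (p * (b * s ^ n)) := by noncomm_ring
        _ = d ^ n * (p * (s ^ n * b)) := by rw [csnb]
        _ = d ^ n * (p * s ^ n) * b := by noncomm_ring
        _ = d ^ n * (s ^ n * p) * b := by rw [csnp]
        _ = (d ^ n * s ^ n) * (p * b) := by noncomm_ring
        _ = p * (p * b) := by rw [hdnsn n hn]
        _ = p * b := by rw [← mul_assoc, hpp]
    have T2 : d ^ n * (p * b) * (s ^ n * p) = p * b * p := by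
      calc d ^ n * (p * b) * (s ^ n * p) = (d ^ n * (p * b) * s ^ n) * p := by noncomm_ring
        _ = p * b * p := by rw [T1]
    calc d ^ n * (p * b) * ((s - s * p) ^ n)
        = d ^ n * (p * b) * s ^ n - d ^ n * (p * b) * (s ^ n * p) := by
          rw [hqn n hn]; noncomm_ring
      _ = p * b - p * b * p := by rw [T1, T2]
  have key2 : ∀ n : ℕ, 1 ≤ n → ((s - s * p) ^ n) * (b * p) * d ^ n = b * p - p * b * p := by
    intro n hn
    have T3 : s ^ n * (b * p) * d ^ n = b * p := by
      calc s ^ n * (b * p) * d ^ n = (s ^ n * b) * (p * d ^ n) := by noncomm_ring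
        _ = (b * s ^ n) * (p * d ^ n) := by rw [csnb]
        _ = b * (s ^ n * p) * d ^ n := by noncomm_ring
        _ = b * (p * s ^ n) * d ^ n := by rw [csnp]
        _ = b * (p * (s ^ n * d ^ n)) := by noncomm_ring
        _ = b * (p * p) := by rw [hsndn n hn]
        _ = b * p := by rw [hpp]
    have T4 : s ^ n * p * (b * p) * d ^ n = p * b * p := by
      calc s ^ n * p * (b * p) * d ^ n = (s ^ n * p) * (b * p) * d ^ n := by noncomm_ring
        _ = (p * s ^ n) * (b * p) * d ^ n := by rw [csnp]
        _ = p * (s ^ n * b) * (p * d ^ n) := by noncomm_ring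
        _ = p * (b * s ^ n) * (p * d ^ n) := by rw [csnb]
        _ = p * b * ((s ^ n * p) * d ^ n) := by noncomm_ring
        _ = p * b * ((p * s ^ n) * d ^ n) := by rw [csnp]
        _ = p * b * (p * (s ^ n * d ^ n)) := by noncomm_ring
        _ = p * b * (p * p) := by rw [hsndn n hn]
        _ = p * b * p := by rw [hpp]
    calc ((s - s * p) ^ n) * (b * p) * d ^ n
        = s ^ n * (b * p) * d ^ n - s ^ n * p * (b * p) * d ^ n := by
          rw [hqn n hn]; noncomm_ring
      _ = b * p - p * b * p := by rw [T3, T4]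
  have hy : p * b - p * b * p = 0 := by
    have hbnd : ∀ᶠ n : ℕ in atTop,
        ‖p * b - p * b * p‖ ≤ ‖d‖ ^ n * ‖(s - s * p) ^ n‖ * ‖p * b‖ := by
      filter_upwards [eventually_ge_atTop 1] with n hn
      rw [← key1 n hn]
      calc ‖d ^ n * (p * b) * (s - s * p) ^ n‖
          ≤ ‖d ^ n‖ * ‖p * b‖ * ‖(s - s * p) ^ n‖ :=
            (norm_mul_le _ _).trans (by gcongr; exact norm_mul_le _ _)
        _ ≤ ‖d‖ ^ n * ‖p * b‖ * ‖(s - s * p) ^ n‖ := by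
            gcongr ?_ * _ * _
            exact norm_pow_le' d (by omega)
        _ = ‖d‖ ^ n * ‖(s - s * p) ^ n‖ * ‖p * b‖ := by ring
    have hT : Tendsto (fun n : ℕ => ‖d‖ ^ n * ‖(s - s * p) ^ n‖ * ‖p * b‖)
        atTop (𝓝 0) := by
      simpa using (hq ‖d‖).mul_const ‖p * b‖
    have h0 := ge_of_tendsto hT hbnd
    simpa [norm_le_zero_iff] using h0.antisymm (norm_nonneg _)
  have hz : b * p - p * b * p = 0 := by
    have hbnd : ∀ᶠ n : ℕ in atTop,
        ‖b * p - p * b * p‖ ≤ ‖d‖ ^ n * ‖(s - s * p) ^ n‖ * ‖b * p‖ := by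
      filter_upwards [eventually_ge_atTop 1] with n hn
      rw [← key2 n hn]
      calc ‖(s - s * p) ^ n * (b * p) * d ^ n‖
          ≤ ‖(s - s * p) ^ n‖ * ‖b * p‖ * ‖d ^ n‖ :=
            (norm_mul_le _ _).trans (by gcongr; exact norm_mul_le _ _)
        _ ≤ ‖(s - s * p) ^ n‖ * ‖b * p‖ * ‖d‖ ^ n := by
            gcongr _ * _ * ?_
            exact norm_pow_le' d (by omega)
        _ = ‖d‖ ^ n * ‖(s - s * p) ^ n‖ * ‖b * p‖ := by ring
    have hT : Tendsto (fun n : ℕ => ‖d‖ ^ n * ‖(s - s * p) ^ n‖ * ‖b * p‖)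
        atTop (𝓝 0) := by
      simpa using (hq ‖d‖).mul_const ‖b * p‖
    have h0 := ge_of_tendsto hT hbnd
    simpa [norm_le_zero_iff] using h0.antisymm (norm_nonneg _)
  have hpb : p * b = b * p := by
    rw [sub_eq_zero.mp hy, sub_eq_zero.mp hz]
  have hsw : s * (d * b - b * d) = 0 := by
    have e1 : s * (d * b) = p * b := by rw [← mul_assoc, ← hp]
    have e2 : s * (b * d) = b * p := by rw [← mul_assoc, hsb, mul_assoc, ← hp]
    rw [mul_sub, e1, e2, hpb, sub_self]
  have hw : p * (d * b - b * d) = d * b - b * d := by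
    have e1 : p * (d * b) = d * b := by rw [← mul_assoc, hpd]
    have e2 : p * (b * d) = b * d := by rw [← mul_assoc, hpb, mul_assoc, hpd]
    rw [mul_sub, e1, e2]
  have hfin : d * b - b * d = 0 := by
    rw [← hw, hp, hsd, mul_assoc, hsw, mul_zero]
  exact sub_eq_zero.mp hfin

theorem stmt_17 {A : Type*} [NormedRing A] [NormedAlgebra ℂ A] [CompleteSpace A]
    (a x b c : A)
    (h1 : a * x = x * a) (h2 : x * a * x = x)
    (h3 : spectralRadius ℂ (a - a ^ 2 * x) = 0)
    (h4 : a * b = c * a) (h5 : b * a = a * c) :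
    (a * x) * b = b * (a * x) ∧ x * b = c * x := by
  have hax_idem : (a*x)*(a*x) = a*x := by
    calc (a*x)*(a*x) = a*(x*a*x) := by noncomm_ring
      _ = a*x := by rw [h2]
  have hax2 : a^2*x^2 = a*x := by
    calc a^2*x^2 = a*(a*x*x) := by noncomm_ring
      _ = a*(x*a*x) := by rw [h1]
      _ = a*x := by rw [h2]
  have hx2a2 : x^2*a^2 = a*x := by
    calc x^2*a^2 = x*(x*a*a) := by noncomm_ring
      _ = x*(a*x*a) := by rw [← h1]
      _ = (x*a*x)*a := by noncomm_ring
      _ = x*a := by rw [h2]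
      _ = a*x := by rw [h1]
  have hdsd : x^2*a^2*x^2 = x^2 := by
    calc x^2*a^2*x^2 = (a*x)*x^2 := by rw [hx2a2]
      _ = (a*x*x)*x := by noncomm_ring
      _ = (x*a*x)*x := by rw [h1]
      _ = x*x := by rw [h2]
      _ = x^2 := by noncomm_ring
  have hsb : a^2*b = b*a^2 := by
    calc a^2*b = a*(a*b) := by noncomm_ring
      _ = a*(c*a) := by rw [h4]
      _ = (a*c)*a := by noncomm_ring
      _ = (b*a)*a := by rw [← h5]
      _ = b*a^2 := by noncomm_ring
  have m1 : a^2*x*a = a^2*(a*x) := by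
    calc a^2*x*a = a^2*(x*a) := by noncomm_ring
      _ = a^2*(a*x) := by rw [← h1]
  have m2 : a^2*x*(a^2*x) = a^2*(a*x) := by
    calc a^2*x*(a^2*x) = a^2*(x*a)*(a*x) := by noncomm_ring
      _ = a^2*(a*x)*(a*x) := by rw [← h1]
      _ = a^2*((a*x)*(a*x)) := by noncomm_ring
      _ = a^2*(a*x) := by rw [hax_idem]
  have m3 : a*(a^2*x) = a^2*(a*x) := by noncomm_ring
  have hfact : (a - a^2*x)*(a + a^2*x) = a^2 - a^2*(a*x) := by
    calc (a - a^2*x)*(a + a^2*x)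
        = a*a + a*(a^2*x) - a^2*x*a - a^2*x*(a^2*x) := by noncomm_ring
      _ = a*a + a^2*(a*x) - a^2*(a*x) - a^2*(a*x) := by rw [m1, m2, m3]
      _ = a^2 - a^2*(a*x) := by noncomm_ring
  have hfact2 : (a + a^2*x)*(a - a^2*x) = a^2 - a^2*(a*x) := by
    calc (a + a^2*x)*(a - a^2*x)
        = a*a - a*(a^2*x) + a^2*x*a - a^2*x*(a^2*x) := by noncomm_ring
      _ = a*a - a^2*(a*x) + a^2*(a*x) - a^2*(a*x) := by rw [m1, m2, m3]
      _ = a^2 - a^2*(a*x) := by noncomm_ring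
  have cqr : Commute (a - a^2*x) (a + a^2*x) := hfact.trans hfact2.symm
  have hq : ∀ C : ℝ, Tendsto (fun n : ℕ => C ^ n * ‖(a^2 - a^2*(a*x)) ^ n‖)
      atTop (𝓝 0) := by
    intro C
    have base := aux_tendsto (a - a^2*x) h3 (|C| * ‖a + a^2*x‖)
    apply squeeze_zero_norm' _ base
    filter_upwards [eventually_ge_atTop 1] with n hn
    have hpow : (a^2 - a^2*(a*x)) ^ n = (a - a^2*x)^n * (a + a^2*x)^n := by
      rw [← hfact, cqr.mul_pow]
    calc ‖C ^ n * ‖(a^2 - a^2*(a*x)) ^ n‖‖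
        = |C|^n * ‖(a - a^2*x)^n * (a + a^2*x)^n‖ := by
          rw [hpow, Real.norm_eq_abs, abs_mul, abs_pow, abs_norm]
      _ ≤ |C|^n * (‖(a - a^2*x)^n‖ * ‖(a + a^2*x)^n‖) := by
          gcongr
          exact norm_mul_le _ _
      _ ≤ |C|^n * (‖(a - a^2*x)^n‖ * ‖a + a^2*x‖^n) := by
          gcongr
          exact norm_pow_le' _ (by omega)
      _ = (|C| * ‖a + a^2*x‖) ^ n * ‖(a - a^2*x) ^ n‖ := by
          rw [mul_pow]; ring
  have hx2b : x^2 * b = b * x^2 :=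
    drazin_comm (a^2) (x^2) b (a*x) hax2.symm (by rw [hax2, hx2a2]) hdsd hq hsb
  have hax2' : a*x^2 = x := by
    calc a*x^2 = (x*a*x) := by
          rw [← h1]
          noncomm_ring
      _ = x := h2
  have hxb : x*b = c*x := by
    calc x*b = (a*x^2)*b := by rw [hax2']
      _ = a*(x^2*b) := by noncomm_ring
      _ = a*(b*x^2) := by rw [hx2b]
      _ = (a*b)*x^2 := by noncomm_ring
      _ = (c*a)*x^2 := by rw [h4]
      _ = c*(a*x^2) := by noncomm_ring
      _ = c*x := by rw [hax2']
  refine ⟨?_, hxb⟩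
  calc (a*x)*b = a*(x*b) := by noncomm_ring
    _ = a*(c*x) := by rw [hxb]
    _ = (a*c)*x := by noncomm_ring
    _ = (b*a)*x := by rw [← h5]
    _ = b*(a*x) := by noncomm_ring
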